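/- arXiv:1806.06356 — 2 statements merged into one kernel-verified Lean document; each statement's English description precedes it below -/
import Mathlib

section
/- Let $M$ be a manifold and $X\subseteq M$ compact. The restriction map $\rho\colon \varinjlim_{U\supseteq X}[U:S^1] \to [X:S^1]$, from the direct limit over open neighborhoods $U$ of $X$ of homotopy classes of continuous maps $U\to S^1$, to homotopy classes of continuous maps $X\to S^1$, is a bijection. -/
open Complex

lemma circle_coe_continuous : Continuous ((↑) : Circle → ℂ) := continuous_induced_dom

lemma circle_exp_sum (s : Finset ℕ) (f : ℕ → ℝ) :
    Circle.exp (∑ i ∈ s, f i) = ∏ i ∈ s, Circle.exp (f i) := by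
  classical
  induction s using Finset.induction with
  | empty => simp
  | insert _ _ h ih => rw [Finset.sum_insert h, Finset.prod_insert h, Circle.exp_add, ih]

lemma circle_slit_of_dist_lt {z w : Circle} (h : dist z w < 1) :
    ((z * w⁻¹ : Circle) : ℂ) ∈ Complex.slitPlane := by
  by_contra hc
  rw [Complex.mem_slitPlane_iff, not_or, not_lt] at hc
  obtain ⟨hre, him⟩ := hc
  rw [not_ne_iff] at him
  have hn : Complex.normSq ((z * w⁻¹ : Circle) : ℂ) = 1 := Circle.normSq_coe _
  rw [Complex.normSq_apply, him] at hn
  have hre' : ((z * w⁻¹ : Circle) : ℂ).re = -1 := by nlinarith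
  have hzw : (z : ℂ) = -(w : ℂ) := by
    have h1 : ((z * w⁻¹ : Circle) : ℂ) = -1 := by
      apply Complex.ext
      · rw [hre']; norm_num
      · rw [him]; norm_num
    have h2 : (z : ℂ) * (w : ℂ)⁻¹ = -1 := by rw [← h1]; push_cast; ring
    field_simp at h2
    linear_combination h2
  have hd : dist z w = dist (z : ℂ) (w : ℂ) := rfl
  rw [hd, dist_eq_norm, hzw] at h
  have : ‖-(w:ℂ) - w‖ = 2 := by
    rw [show -(w:ℂ) - w = -(2 * w) by ring, norm_neg]
    simp [Circle.norm_coe]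
  linarith [h, this.ge]

lemma homotopic_lift {Z : Type*} [MetricSpace Z] [CompactSpace Z]
    {f g : C(Z, Circle)} (h : f.Homotopic g) :
    ∃ lam : C(Z, ℝ), ∀ z, f z = g z * Circle.exp (lam z) := by
  obtain ⟨H⟩ := h
  have hu : UniformContinuous (fun p : unitInterval × Z => H p) :=
    CompactSpace.uniformContinuous_of_continuous H.continuous
  obtain ⟨δ, hδ, hδ'⟩ := Metric.uniformContinuous_iff.mp hu 1 one_pos
  obtain ⟨n, hn⟩ := exists_nat_one_div_lt hδ
  set N : ℕ := n + 1 with hN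
  have hNpos : (0:ℝ) < N := by positivity
  set t : ℕ → unitInterval := fun i => Set.projIcc 0 1 zero_le_one ((i : ℝ) / N) with ht
  have htval : ∀ i ≤ N, ((t i : ℝ)) = (i : ℝ) / N := by
    intro i hi
    rw [ht]
    simp only
    rw [Set.projIcc_of_mem]
    exact ⟨by positivity, by rw [div_le_one hNpos]; exact_mod_cast hi⟩
  have hq : ∀ i < N, ∀ z, dist (H (t i, z)) (H (t (i+1), z)) < 1 := by
    intro i hi z
    apply hδ'
    rw [Prod.dist_eq]
    have : dist (t i) (t (i+1)) = 1 / N := by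
      rw [Subtype.dist_eq, htval i hi.le, htval (i+1) hi, Real.dist_eq]
      push_cast
      rw [abs_of_nonpos (by rw [sub_nonpos]; gcongr; linarith)]
      ring
    rw [this, dist_self]
    have h1N : (1:ℝ)/N < δ := by rw [hN]; push_cast; exact hn
    exact max_lt h1N hδ
  have hslit : ∀ i < N, ∀ z,
      ((H (t i, z) * (H (t (i+1), z))⁻¹ : Circle) : ℂ) ∈ Complex.slitPlane :=
    fun i hi z => circle_slit_of_dist_lt (hq i hi z)
  have hc : ∀ j, Continuous fun z : Z => H (t j, z) :=
    fun j => H.continuous.comp (continuous_const.prodMk continuous_id)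
  refine ⟨⟨fun z => ∑ i ∈ Finset.range N,
      Complex.arg ((H (t i, z) * (H (t (i+1), z))⁻¹ : Circle) : ℂ), ?_⟩, ?_⟩
  · apply continuous_finset_sum
    intro i hi
    rw [Finset.mem_range] at hi
    have cont : Continuous fun z : Z => ((H (t i, z) * (H (t (i+1), z))⁻¹ : Circle) : ℂ) :=
      circle_coe_continuous.comp ((hc i).mul (hc (i+1)).inv)
    rw [continuous_iff_continuousAt]
    intro z
    exact ContinuousAt.comp (f := fun z : Z => ((H (t i, z) * (H (t (i+1), z))⁻¹ : Circle) : ℂ))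
      (Complex.continuousAt_arg (hslit i hi z)) cont.continuousAt
  · intro z
    simp only [ContinuousMap.coe_mk]
    rw [circle_exp_sum]
    have heq : ∀ i ∈ Finset.range N,
        Circle.exp (Complex.arg ((H (t i, z) * (H (t (i+1), z))⁻¹ : Circle) : ℂ))
          = H (t i, z) / H (t (i+1), z) := by
      intro i _
      rw [Circle.exp_arg, div_eq_mul_inv]
    rw [Finset.prod_congr rfl heq, Finset.prod_range_div' (fun i => H (t i, z)) N]
    have ht0 : t 0 = 0 := by
      ext; rw [htval 0 (Nat.zero_le _)]; simp
    have htN : t N = 1 := by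
      ext; rw [htval N le_rfl, div_self hNpos.ne']; rfl
    rw [ht0, htN, H.apply_zero, H.apply_one, mul_comm, ← div_eq_iff_eq_mul]

/-- For a compact subset `X` of a manifold (more generally a metric space) `M`,
the restriction map `ρ : colim_{U ⊇ X open} [U : S¹] → [X : S¹]` is a bijection.
Unfolded: (surjectivity) every continuous `φ : X → S¹` is, up to homotopy, the
restriction of a continuous circle-valued map on some open neighborhood of `X`;
(injectivity) if two circle-valued maps on an open neighborhood `U ⊇ X` are homotopic
after restriction to `X`, then they are already homotopic after restriction to some
smaller open neighborhood `V` with `X ⊆ V ⊆ U` — i.e. they represent the same element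
of the direct limit. -/
theorem germ_restriction_bijective {M : Type*} [MetricSpace M]
    (X : Set M) (hX : IsCompact X) :
    (∀ φ : C(X, Circle), ∃ (U : Set M) (hU : IsOpen U) (hXU : X ⊆ U)
        (ψ : C(U, Circle)),
        (ψ.comp ⟨Set.inclusion hXU, continuous_inclusion hXU⟩).Homotopic φ) ∧
    (∀ (U : Set M) (hU : IsOpen U) (hXU : X ⊆ U) (ψ₀ ψ₁ : C(U, Circle)),
        (ψ₀.comp ⟨Set.inclusion hXU, continuous_inclusion hXU⟩).Homotopic
          (ψ₁.comp ⟨Set.inclusion hXU, continuous_inclusion hXU⟩) →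
        ∃ (V : Set M) (hV : IsOpen V) (hXV : X ⊆ V) (hVU : V ⊆ U),
          (ψ₀.comp ⟨Set.inclusion hVU, continuous_inclusion hVU⟩).Homotopic
          (ψ₁.comp ⟨Set.inclusion hVU, continuous_inclusion hVU⟩)) := by
  have hXc : IsClosed X := hX.isClosed
  constructor
  · -- surjectivity
    intro φ
    set φc : C(X, ℂ) := ⟨fun x => (φ x : ℂ), circle_coe_continuous.comp φ.continuous⟩ with hφc
    obtain ⟨g, hg⟩ := φc.exists_restrict_eq hXc
    have hg' : ∀ x : X, g ↑x = (φ x : ℂ) := fun x => DFunLike.congr_fun hg x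
    have hU : IsOpen {m : M | g m ≠ 0} := isOpen_ne.preimage g.continuous
    have hXU : X ⊆ {m : M | g m ≠ 0} := by
      intro m hm
      show g m ≠ 0
      have := hg' ⟨m, hm⟩
      rw [this]
      exact Circle.coe_ne_zero _
    have hne : ∀ u : {m : M | g m ≠ 0}, ‖g ↑u‖ ≠ 0 := fun u => norm_ne_zero_iff.mpr u.2
    set ψ : C({m : M | g m ≠ 0}, Circle) :=
      ⟨fun u => ⟨‖g ↑u‖⁻¹ • g ↑u, mem_sphere_zero_iff_norm.mpr (by
          rw [norm_smul, norm_inv, norm_norm, inv_mul_cancel₀ (hne u)])⟩,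
        by
          have hgc : Continuous fun u : {m : M | g m ≠ 0} => g ↑u :=
            g.continuous.comp continuous_subtype_val
          exact ((hgc.norm.inv₀ hne).smul hgc).subtype_mk _⟩ with hψ
    refine ⟨_, hU, hXU, ψ, ?_⟩
    have : ψ.comp ⟨Set.inclusion hXU, continuous_inclusion hXU⟩ = φ := by
      ext x
      show ‖g ↑(Set.inclusion hXU x)‖⁻¹ • g ↑(Set.inclusion hXU x) = (φ x : ℂ)
      rw [show (↑(Set.inclusion hXU x) : M) = ↑x from rfl, hg' x]
      simp [Circle.norm_coe]
    rw [this]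
  · -- injectivity
    intro U hU hXU ψ₀ ψ₁ hyp
    haveI : CompactSpace X := isCompact_iff_compactSpace.mp hX
    obtain ⟨lam, hlam⟩ := homotopic_lift hyp
    obtain ⟨Lam, hLam⟩ := lam.exists_restrict_eq hXc
    have hLam' : ∀ x : X, Lam ↑x = lam x := fun x => DFunLike.congr_fun hLam x
    set G : C(U, Circle) :=
      ⟨fun u => ψ₀ u * (ψ₁ u)⁻¹ * Circle.exp (-(Lam ↑u)),
        (ψ₀.continuous.mul ψ₁.continuous.inv).mul
          ((map_continuous Circle.exp).comp
            ((Lam.continuous.comp continuous_subtype_val).neg))⟩ with hG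
    have hG1 : ∀ x : X, G (Set.inclusion hXU x) = 1 := by
      intro x
      have h1 : ψ₀ (Set.inclusion hXU x) = ψ₁ (Set.inclusion hXU x) * Circle.exp (lam x) := by
        have := hlam x
        simpa using this
      show ψ₀ (Set.inclusion hXU x) * (ψ₁ (Set.inclusion hXU x))⁻¹ *
          Circle.exp (-(Lam ↑(Set.inclusion hXU x))) = 1
      rw [show (↑(Set.inclusion hXU x) : M) = ↑x from rfl, hLam' x, h1, Circle.exp_neg]
      rw [mul_right_comm, mul_inv_cancel_right, mul_inv_cancel]
    set V : Set M := Subtype.val '' {u : U | (G u : ℂ) ∈ Complex.slitPlane} with hVdef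
    have hV : IsOpen V :=
      hU.isOpenMap_subtype_val _
        (Complex.isOpen_slitPlane.preimage (circle_coe_continuous.comp G.continuous))
    have hXV : X ⊆ V := by
      intro m hm
      refine ⟨⟨m, hXU hm⟩, ?_, rfl⟩
      show (G ⟨m, hXU hm⟩ : ℂ) ∈ Complex.slitPlane
      rw [show (⟨m, hXU hm⟩ : U) = Set.inclusion hXU ⟨m, hm⟩ from rfl, hG1 ⟨m, hm⟩]
      simpa using Complex.one_mem_slitPlane
    have hVU : V ⊆ U := by rintro m ⟨u, _, rfl⟩; exact u.2
    have hslitV : ∀ v : V, (G (Set.inclusion hVU v) : ℂ) ∈ Complex.slitPlane := by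
      intro v
      obtain ⟨u, hu, huv⟩ := v.2
      rwa [show Set.inclusion hVU v = u from Subtype.ext huv.symm]
    set θ : V → ℝ := fun v => Complex.arg (G (Set.inclusion hVU v)) with hθ
    have hθc : Continuous θ := by
      rw [continuous_iff_continuousAt]
      intro v
      have cont : Continuous fun v : V => ((G (Set.inclusion hVU v)) : ℂ) :=
        circle_coe_continuous.comp (G.continuous.comp (continuous_inclusion hVU))
      exact ContinuousAt.comp (f := fun v : V => ((G (Set.inclusion hVU v)) : ℂ))
        (Complex.continuousAt_arg (hslitV v)) cont.continuousAt
    refine ⟨V, hV, hXV, hVU, ⟨?_⟩⟩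
    refine
      { toContinuousMap := ⟨fun p => ψ₁ (Set.inclusion hVU p.2) *
          Circle.exp ((1 - (p.1 : ℝ)) * (Lam ↑p.2 + θ p.2)), ?_⟩
        map_zero_left := ?_
        map_one_left := ?_ }
    · have c1 : Continuous fun p : unitInterval × V => ψ₁ (Set.inclusion hVU p.2) :=
        ψ₁.continuous.comp ((continuous_inclusion hVU).comp continuous_snd)
      have c2 : Continuous fun p : unitInterval × V =>
          (1 - (p.1 : ℝ)) * (Lam ↑p.2 + θ p.2) :=
        (continuous_const.sub (continuous_subtype_val.comp continuous_fst)).mul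
          (((Lam.continuous.comp continuous_subtype_val).comp continuous_snd).add
            (hθc.comp continuous_snd))
      exact c1.mul ((map_continuous Circle.exp).comp c2)
    · intro v
      show ψ₁ (Set.inclusion hVU v) *
          Circle.exp ((1 - ((0 : unitInterval) : ℝ)) * (Lam ↑v + θ v)) =
          ψ₀ (Set.inclusion hVU v)
      rw [show ((0 : unitInterval) : ℝ) = 0 from rfl, sub_zero, one_mul,
        Circle.exp_add, hθ]
      rw [Circle.exp_arg]
      show ψ₁ (Set.inclusion hVU v) * (Circle.exp (Lam ↑v) *
        (ψ₀ (Set.inclusion hVU v) * (ψ₁ (Set.inclusion hVU v))⁻¹ *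
          Circle.exp (-(Lam ↑(Set.inclusion hVU v))))) = ψ₀ (Set.inclusion hVU v)
      rw [show (↑(Set.inclusion hVU v) : M) = ↑v from rfl, Circle.exp_neg]
      rw [mul_comm (ψ₀ _), mul_assoc, mul_left_comm, mul_inv_cancel_left, mul_comm (ψ₀ _),
        mul_inv_cancel_left]
    · intro v
      show ψ₁ (Set.inclusion hVU v) *
          Circle.exp ((1 - ((1 : unitInterval) : ℝ)) * (Lam ↑v + θ v)) =
          ψ₁ (Set.inclusion hVU v)
      rw [show ((1 : unitInterval) : ℝ) = 1 from rfl, sub_self, zero_mul,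
        Circle.exp_zero, mul_one]
end

section
/- Let $M$ be a manifold and $X_1,X_2,X_3\subseteq M$ compact sets with $X_1\cap X_2\cap X_3=\emptyset$, and let $X=X_1\cup X_2\cup X_3$. Let $\gamma_k = \{e^{i\theta} : \theta\in[2\pi(k-1)/3, 2\pi k/3]\}$ for $k=1,2,3$. Then there exists a continuous map $f\colon X\to S^1$ with $f(X_k)\subseteq\gamma_k$ for each $k$. -/
open Real

/-- The closed arc `{e^{iθ} : θ ∈ [a,b]}` of the unit circle. -/
def circleArc (a b : ℝ) : Set ℂ :=
  {z : ℂ | ∃ θ ∈ Set.Icc a b, z = Complex.exp (θ * Complex.I)}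

noncomputable def omega3 : ℂ := Complex.exp ((2*π/3 : ℝ) * Complex.I)

lemma omega3_re : omega3.re = -(1/2) := by
  rw [omega3, Complex.exp_ofReal_mul_I_re,
    show (2*π/3 : ℝ) = π - π/3 by ring, Real.cos_pi_sub, Real.cos_pi_div_three]

lemma omega3_im : omega3.im = Real.sqrt 3 / 2 := by
  rw [omega3, Complex.exp_ofReal_mul_I_im,
    show (2*π/3 : ℝ) = π - π/3 by ring, Real.sin_pi_sub, Real.sin_pi_div_three]

lemma omega3_ne_zero : omega3 ≠ 0 := Complex.exp_ne_zero _

lemma omega3_abs : ‖omega3‖ = 1 := by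
  rw [omega3, Complex.norm_exp]
  simp

lemma omega3_cube : omega3 ^ 3 = 1 := by
  rw [omega3, ← Complex.exp_nat_mul]
  rw [show ((3:ℕ):ℂ) * ((2*π/3 : ℝ) * Complex.I) = 2 * (π:ℝ) * Complex.I by push_cast; ring]
  exact Complex.exp_two_pi_mul_I

lemma key_arc (s t : ℝ) (hs : 0 ≤ s) (ht : 0 ≤ t) (hst : s ≠ 0 ∨ t ≠ 0) :
    ((s : ℂ) + t * omega3) ≠ 0 ∧
    ∃ θ ∈ Set.Icc (0:ℝ) (2*π/3),
      ((s : ℂ) + t * omega3) / ((‖(s : ℂ) + t * omega3‖ : ℝ) : ℂ)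
        = Complex.exp ((θ:ℝ) * Complex.I) := by
  set w : ℂ := (s : ℂ) + t * omega3 with hw
  have hre : w.re = s - t/2 := by
    simp [hw, omega3_re]; ring
  have him : w.im = t * (Real.sqrt 3 / 2) := by
    simp [hw, omega3_im]
  have h3 : (Real.sqrt 3) ^ 2 = 3 := Real.sq_sqrt (by norm_num)
  have hnsq : Complex.normSq w = s^2 - s*t + t^2 := by
    rw [Complex.normSq_apply, hre, him]
    nlinarith [h3]
  have hpos : 0 < s^2 - s*t + t^2 := by
    rcases hst with h | h
    · nlinarith [sq_nonneg (s - t), sq_nonneg s, sq_nonneg t, (hs.lt_of_ne (Ne.symm h))]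
    · nlinarith [sq_nonneg (s - t), (ht.lt_of_ne (Ne.symm h))]
  have hw0 : w ≠ 0 := by
    intro h
    rw [h, Complex.normSq_zero] at hnsq
    simp [hnsq.symm] at hpos
  refine ⟨hw0, Complex.arg w, ⟨Complex.arg_nonneg_iff.2 (by rw [him]; positivity), ?_⟩, ?_⟩
  · have habs : 0 < ‖w‖ := norm_pos_iff.mpr hw0
    have habs_sq : (‖w‖)^2 = s^2 - s*t + t^2 := by rw [Complex.sq_norm, hnsq]
    have hcos : Real.cos (Complex.arg w) = w.re / ‖w‖ := Complex.cos_arg hw0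
    have hge : -(1/2 : ℝ) ≤ Real.cos (Complex.arg w) := by
      rw [hcos, le_div_iff₀ habs, hre]
      rcases le_or_gt (t - 2*s) 0 with h | h
      · nlinarith [habs.le]
      · have hsq : (t - 2*s)^2 ≤ (‖w‖)^2 := by
          rw [habs_sq]; nlinarith
        have := (pow_le_pow_iff_left₀ h.le habs.le (two_ne_zero)).1 hsq
        linarith
    by_contra hgt
    push_neg at hgt
    have h1 : (2*π/3 : ℝ) ∈ Set.Icc 0 π := by
      constructor <;> nlinarith [Real.pi_pos]
    have h2 : Complex.arg w ∈ Set.Icc 0 π :=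
      ⟨Complex.arg_nonneg_iff.2 (by rw [him]; positivity), Complex.arg_le_pi w⟩
    have := Real.strictAntiOn_cos h1 h2 hgt
    rw [show (2*π/3 : ℝ) = π - π/3 by ring, Real.cos_pi_sub, Real.cos_pi_div_three] at this
    linarith
  · rw [div_eq_iff (by exact_mod_cast (norm_pos_iff.mpr hw0).ne')]
    rw [mul_comm]
    exact (Complex.norm_mul_exp_arg_mul_I w).symm

open Classical in
/-- Distance to `s`, replaced by the constant `1` if `s` is empty, so that it
vanishes exactly on `s` (for closed `s`). -/
noncomputable def distFn {M : Type*} [MetricSpace M] (s : Set M) (x : M) : ℝ :=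
  if s.Nonempty then Metric.infDist x s else 1

lemma distFn_nonneg {M : Type*} [MetricSpace M] (s : Set M) (x : M) : 0 ≤ distFn s x := by
  unfold distFn; split_ifs
  · exact Metric.infDist_nonneg
  · norm_num

lemma distFn_continuous {M : Type*} [MetricSpace M] (s : Set M) : Continuous (distFn s) := by
  unfold distFn
  by_cases h : s.Nonempty <;> simp only [h, if_true, if_false]
  · exact Metric.continuous_infDist_pt s
  · exact continuous_const

lemma distFn_eq_zero_of_mem {M : Type*} [MetricSpace M] {s : Set M} {x : M} (h : x ∈ s) :
    distFn s x = 0 := by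
  unfold distFn
  rw [if_pos ⟨x, h⟩]
  exact Metric.infDist_zero_of_mem h

lemma mem_of_distFn_eq_zero {M : Type*} [MetricSpace M] {s : Set M} {x : M} (hs : IsClosed s)
    (h : distFn s x = 0) : x ∈ s := by
  unfold distFn at h
  split_ifs at h with hne
  · exact (hs.mem_iff_infDist_zero hne).2 h
  · norm_num at h

lemma exp_add_real_mul_I (a b : ℝ) :
    Complex.exp (((a + b : ℝ) : ℂ) * Complex.I)
      = Complex.exp ((a : ℂ) * Complex.I) * Complex.exp ((b : ℂ) * Complex.I) := by
  rw [← Complex.exp_add]; congr 1; push_cast; ring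

lemma omega3_sq : Complex.exp (((4*π/3 : ℝ) : ℂ) * Complex.I) = omega3 ^ 2 := by
  rw [omega3, ← Complex.exp_nat_mul]
  congr 1; push_cast; ring

/-- If `X₁, X₂, X₃` are compact subsets of a manifold (more generally a
metric space) `M` with `X₁ ∩ X₂ ∩ X₃ = ∅`, and `γₖ = {e^{iθ} : θ ∈ [2π(k-1)/3, 2πk/3]}`,
then there is a continuous `f : X₁ ∪ X₂ ∪ X₃ → S¹` with `f(Xₖ) ⊆ γₖ` for each `k`. -/
theorem exists_circle_map_of_decomposition {M : Type*} [MetricSpace M]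
    (X₁ X₂ X₃ : Set M) (h₁ : IsCompact X₁) (h₂ : IsCompact X₂) (h₃ : IsCompact X₃)
    (hint : X₁ ∩ X₂ ∩ X₃ = ∅) :
    ∃ f : ↥(X₁ ∪ X₂ ∪ X₃) → Circle, Continuous f ∧
      (∀ x : ↥(X₁ ∪ X₂ ∪ X₃), (x : M) ∈ X₁ → (f x : ℂ) ∈ circleArc 0 (2 * π / 3)) ∧
      (∀ x : ↥(X₁ ∪ X₂ ∪ X₃), (x : M) ∈ X₂ → (f x : ℂ) ∈ circleArc (2 * π / 3) (4 * π / 3)) ∧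
      (∀ x : ↥(X₁ ∪ X₂ ∪ X₃), (x : M) ∈ X₃ → (f x : ℂ) ∈ circleArc (4 * π / 3) (2 * π)) := by
  have hc₁ := h₁.isClosed
  have hc₂ := h₂.isClosed
  have hc₃ := h₃.isClosed
  set d₁ := distFn X₁ with hd₁
  set d₂ := distFn X₂ with hd₂
  set d₃ := distFn X₃ with hd₃
  set g : M → ℂ := fun x => (d₂ x : ℂ) + (d₃ x : ℂ) * omega3 + (d₁ x : ℂ) * omega3 ^ 2 with hg
  -- a helper: for x in the union, not both relevant distances vanish
  have hnb : ∀ x : M, x ∈ X₁ ∪ X₂ ∪ X₃ →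
      (x ∈ X₁ → (d₂ x ≠ 0 ∨ d₃ x ≠ 0)) ∧
      (x ∈ X₂ → (d₃ x ≠ 0 ∨ d₁ x ≠ 0)) ∧
      (x ∈ X₃ → (d₁ x ≠ 0 ∨ d₂ x ≠ 0)) := by
    intro x _
    refine ⟨fun hx1 => ?_, fun hx2 => ?_, fun hx3 => ?_⟩ <;> by_contra h <;> push_neg at h
    · have m2 := mem_of_distFn_eq_zero hc₂ h.1
      have m3 := mem_of_distFn_eq_zero hc₃ h.2
      have : x ∈ X₁ ∩ X₂ ∩ X₃ := ⟨⟨hx1, m2⟩, m3⟩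
      rw [hint] at this
      exact this
    · have m3 := mem_of_distFn_eq_zero hc₃ h.1
      have m1 := mem_of_distFn_eq_zero hc₁ h.2
      have : x ∈ X₁ ∩ X₂ ∩ X₃ := ⟨⟨m1, hx2⟩, m3⟩
      rw [hint] at this
      exact this
    · have m1 := mem_of_distFn_eq_zero hc₁ h.1
      have m2 := mem_of_distFn_eq_zero hc₂ h.2
      have : x ∈ X₁ ∩ X₂ ∩ X₃ := ⟨⟨m1, m2⟩, hx3⟩
      rw [hint] at this
      exact this
  -- g is nonzero on the union
  have hgx : ∀ x : M, x ∈ X₁ ∪ X₂ ∪ X₃ → g x ≠ 0 := by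
    intro x hx
    simp only [Set.mem_union] at hx
    rcases hx with (hx1 | hx2) | hx3
    · have hz : d₁ x = 0 := distFn_eq_zero_of_mem hx1
      have := (key_arc (d₂ x) (d₃ x) (distFn_nonneg _ _) (distFn_nonneg _ _)
        (((hnb x (Or.inl (Or.inl hx1))).1) hx1)).1
      have heq : g x = (d₂ x : ℂ) + (d₃ x : ℂ) * omega3 := by
        rw [hg]; simp [hz]
      rw [heq]; exact this
    · have hz : d₂ x = 0 := distFn_eq_zero_of_mem hx2
      have hkey := (key_arc (d₃ x) (d₁ x) (distFn_nonneg _ _) (distFn_nonneg _ _)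
        (((hnb x (Or.inl (Or.inr hx2))).2.1) hx2)).1
      have heq : g x = omega3 * ((d₃ x : ℂ) + (d₁ x : ℂ) * omega3) := by
        rw [hg]; simp only [hz, Complex.ofReal_zero]; ring
      rw [heq]
      exact mul_ne_zero omega3_ne_zero hkey
    · have hz : d₃ x = 0 := distFn_eq_zero_of_mem hx3
      have hkey := (key_arc (d₁ x) (d₂ x) (distFn_nonneg _ _) (distFn_nonneg _ _)
        (((hnb x (Or.inr hx3)).2.2) hx3)).1
      have heq : g x = omega3 ^ 2 * ((d₁ x : ℂ) + (d₂ x : ℂ) * omega3) := by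
        rw [hg]; simp only [hz, Complex.ofReal_zero]
        linear_combination (-(d₂ x : ℂ)) * omega3_cube
      rw [heq]
      exact mul_ne_zero (pow_ne_zero 2 omega3_ne_zero) hkey
  have hgc : Continuous g := by
    rw [hg]
    exact ((Complex.continuous_ofReal.comp (distFn_continuous X₂)).add
      ((Complex.continuous_ofReal.comp (distFn_continuous X₃)).mul continuous_const)).add
      ((Complex.continuous_ofReal.comp (distFn_continuous X₁)).mul continuous_const)
  have hmem : ∀ x : ↥(X₁ ∪ X₂ ∪ X₃),
      g ↑x / ((‖g ↑x‖ : ℝ) : ℂ) ∈ Submonoid.unitSphere ℂ := by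
    intro x
    have h0 : g ↑x ≠ 0 := hgx ↑x x.2
    show g ↑x / ((‖g ↑x‖ : ℝ) : ℂ) ∈ Metric.sphere (0:ℂ) 1
    rw [mem_sphere_zero_iff_norm, norm_div, Complex.norm_real, norm_norm,
      div_self (norm_ne_zero_iff.mpr h0)]
  have habsne : ∀ x : ↥(X₁ ∪ X₂ ∪ X₃), (((‖g ↑x‖ : ℝ) : ℂ)) ≠ 0 := by
    intro x
    exact_mod_cast (norm_pos_iff.mpr (hgx ↑x x.2)).ne'
  refine ⟨fun x => ⟨g ↑x / ((‖g ↑x‖ : ℝ) : ℂ), hmem x⟩, ?_, ?_, ?_, ?_⟩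
  · exact Continuous.subtype_mk
      ((hgc.comp continuous_subtype_val).div
        (Complex.continuous_ofReal.comp
          (continuous_norm.comp (hgc.comp continuous_subtype_val))) habsne) _
  · intro x hx
    have hz : d₁ (↑x : M) = 0 := distFn_eq_zero_of_mem hx
    obtain ⟨_, θ, hθ, hexp⟩ := key_arc (d₂ ↑x) (d₃ ↑x) (distFn_nonneg _ _) (distFn_nonneg _ _)
      (((hnb ↑x x.2).1) hx)
    refine ⟨θ, hθ, ?_⟩
    show g ↑x / ((‖g ↑x‖ : ℝ) : ℂ) = Complex.exp ((θ : ℂ) * Complex.I)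
    have heq : g ↑x = (d₂ (↑x : M) : ℂ) + (d₃ (↑x : M) : ℂ) * omega3 := by
      rw [hg]; simp [hz]
    rw [heq]
    exact hexp
  · intro x hx
    have hz : d₂ (↑x : M) = 0 := distFn_eq_zero_of_mem hx
    obtain ⟨hw0, θ, hθ, hexp⟩ := key_arc (d₃ ↑x) (d₁ ↑x) (distFn_nonneg _ _) (distFn_nonneg _ _)
      (((hnb ↑x x.2).2.1) hx)
    refine ⟨2*π/3 + θ, ⟨by linarith [hθ.1], by linarith [hθ.2]⟩, ?_⟩
    show g ↑x / ((‖g ↑x‖ : ℝ) : ℂ)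
      = Complex.exp (((2*π/3 + θ : ℝ) : ℂ) * Complex.I)
    have heq : g ↑x = omega3 * ((d₃ (↑x : M) : ℂ) + (d₁ (↑x : M) : ℂ) * omega3) := by
      rw [hg]; simp only [hz, Complex.ofReal_zero]; ring
    rw [heq, norm_mul, omega3_abs, one_mul, exp_add_real_mul_I, ← omega3,
      mul_div_assoc, hexp]
  · intro x hx
    have hz : d₃ (↑x : M) = 0 := distFn_eq_zero_of_mem hx
    obtain ⟨hw0, θ, hθ, hexp⟩ := key_arc (d₁ ↑x) (d₂ ↑x) (distFn_nonneg _ _) (distFn_nonneg _ _)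
      (((hnb ↑x x.2).2.2) hx)
    refine ⟨4*π/3 + θ, ⟨by linarith [hθ.1], by linarith [hθ.2]⟩, ?_⟩
    show g ↑x / ((‖g ↑x‖ : ℝ) : ℂ)
      = Complex.exp (((4*π/3 + θ : ℝ) : ℂ) * Complex.I)
    have heq : g ↑x = omega3 ^ 2 * ((d₁ (↑x : M) : ℂ) + (d₂ (↑x : M) : ℂ) * omega3) := by
      rw [hg]; simp only [hz, Complex.ofReal_zero]
      linear_combination (-(d₂ (↑x : M) : ℂ)) * omega3_cube
    rw [heq, norm_mul, norm_pow, omega3_abs, one_pow, one_mul, exp_add_real_mul_I, omega3_sq,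
      mul_div_assoc, hexp]
end
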